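/- Let 0 < a ≤ c and 0 < b ≤ d. Then the function F(y) = (erf(a·y)·erf(b·y))/(erf(c·y)·erf(d·y)) is monotonically nondecreasing for y ≥ 1, and strictly increasing if a < c or b < d. -/

import Mathlib

open Real

noncomputable def erf (x : ℝ) : ℝ := (2 / Real.sqrt Real.pi) * ∫ t in (0:ℝ)..x, Real.exp (-t^2)

lemma erf_hasDerivAt (x : ℝ) : HasDerivAt erf (2 / Real.sqrt Real.pi * Real.exp (-x^2)) x := by
  have hc : Continuous fun t : ℝ => Real.exp (-t^2) := by continuity
  have h := (hc.integral_hasStrictDerivAt 0 x).hasDerivAt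
  exact h.const_mul _

lemma erf_pos {x : ℝ} (hx : 0 < x) : 0 < erf x := by
  have hc : Continuous fun t : ℝ => Real.exp (-t^2) := by continuity
  have : 0 < ∫ t in (0:ℝ)..x, Real.exp (-t^2) :=
    intervalIntegral.intervalIntegral_pos_of_pos (hc.intervalIntegrable 0 x)
      (fun t => Real.exp_pos _) hx
  have h2 : 0 < 2 / Real.sqrt Real.pi :=
    div_pos two_pos (Real.sqrt_pos.mpr Real.pi_pos)
  exact mul_pos h2 this

lemma erf_le {x : ℝ} (hx : 0 ≤ x) : erf x ≤ 2 / Real.sqrt Real.pi * x := by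
  have hc : Continuous fun t : ℝ => Real.exp (-t^2) := by continuity
  have h : (∫ t in (0:ℝ)..x, Real.exp (-t^2)) ≤ ∫ t in (0:ℝ)..x, (1:ℝ) := by
    apply intervalIntegral.integral_mono_on hx (hc.intervalIntegrable 0 x)
      (intervalIntegrable_const)
    intro t ht
    exact Real.exp_le_one_iff.mpr (by nlinarith [sq_nonneg t])
  simp only [intervalIntegral.integral_const, smul_eq_mul, mul_one, sub_zero] at h
  have h2 : 0 ≤ 2 / Real.sqrt Real.pi :=
    le_of_lt (div_pos two_pos (Real.sqrt_pos.mpr Real.pi_pos))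
  unfold erf
  exact mul_le_mul_of_nonneg_left h h2

noncomputable def gAux (t : ℝ) : ℝ := t * Real.exp (-t^2) / erf t

lemma gAux_hasDerivAt {t : ℝ} (ht : 0 < t) :
    HasDerivAt gAux (((1 - 2*t^2) * Real.exp (-t^2) * erf t -
      t * Real.exp (-t^2) * (2 / Real.sqrt Real.pi * Real.exp (-t^2))) / (erf t)^2) t := by
  have h1 : HasDerivAt (fun t : ℝ => -t^2) (-(2*t)) t := by
    simpa [Pi.neg_def] using ((hasDerivAt_pow 2 t).neg)
  have h2 : HasDerivAt (fun t : ℝ => Real.exp (-t^2)) (Real.exp (-t^2) * (-(2*t))) t := h1.exp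
  have hu : HasDerivAt (fun t : ℝ => t * Real.exp (-t^2))
      ((1 - 2*t^2) * Real.exp (-t^2)) t := by
    have : HasDerivAt (fun t : ℝ => t * Real.exp (-t^2))
        (1 * Real.exp (-t^2) + id t * (Real.exp (-t^2) * -(2*t))) t := (hasDerivAt_id t).mul h2
    convert this using 1
    simp [id]
    ring
  have hne : erf t ≠ 0 := (erf_pos ht).ne'
  exact hu.div (erf_hasDerivAt t) hne

lemma gAux_deriv_neg {t : ℝ} (ht : 0 < t) : deriv gAux t < 0 := by
  rw [(gAux_hasDerivAt ht).deriv]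
  have hie : 0 < Real.exp (-t^2) := Real.exp_pos _
  have hposerf : 0 < erf t := erf_pos ht
  apply div_neg_of_neg_of_pos _ (by positivity)
  have key : (1 - 2*t^2) * erf t < 2 / Real.sqrt Real.pi * t * Real.exp (-t^2) := by
    rcases le_or_gt (1 - 2*t^2) 0 with h | h
    · have : (1 - 2*t^2) * erf t ≤ 0 := mul_nonpos_of_nonpos_of_nonneg h hposerf.le
      have : 0 < 2 / Real.sqrt Real.pi * t * Real.exp (-t^2) := by
        have := Real.sqrt_pos.mpr Real.pi_pos; positivity
      linarith
    · have hle := erf_le ht.le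
      have hK : 0 < 2 / Real.sqrt Real.pi := div_pos two_pos (Real.sqrt_pos.mpr Real.pi_pos)
      have h3 : 1 - 2*t^2 < Real.exp (-t^2) := by
        have := Real.add_one_le_exp (-t^2)
        nlinarith [sq_nonneg t, ht]
      calc (1 - 2*t^2) * erf t ≤ (1 - 2*t^2) * (2 / Real.sqrt Real.pi * t) :=
            mul_le_mul_of_nonneg_left hle h.le
        _ = 2 / Real.sqrt Real.pi * t * (1 - 2*t^2) := by ring
        _ < 2 / Real.sqrt Real.pi * t * Real.exp (-t^2) := by
            exact mul_lt_mul_of_pos_left h3 (by positivity)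
  nlinarith [hie]

lemma gAux_strictAnti : StrictAntiOn gAux (Set.Ioi 0) := by
  apply strictAntiOn_of_deriv_neg (convex_Ioi 0)
  · intro x hx
    have hx0 : 0 < x := hx
    exact ((gAux_hasDerivAt hx0).differentiableAt.continuousAt).continuousWithinAt
  · intro x hx
    rw [interior_Ioi] at hx
    exact gAux_deriv_neg hx

lemma erf_comp_hasDerivAt (a y : ℝ) :
    HasDerivAt (fun y : ℝ => erf (a*y)) (2 / Real.sqrt Real.pi * Real.exp (-(a*y)^2) * a) y := by
  have := (erf_hasDerivAt (a*y)).comp y ((hasDerivAt_id y).const_mul a)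
  simpa [Function.comp_def] using this

lemma ratio_strictMono {a c : ℝ} (ha : 0 < a) (hac : a < c) :
    StrictMonoOn (fun y : ℝ => erf (a*y) / erf (c*y)) (Set.Ici 1) := by
  have hc0 : 0 < c := ha.trans hac
  have hne : ∀ y : ℝ, 1 ≤ y → erf (c*y) ≠ 0 := fun y hy =>
    (erf_pos (by nlinarith)).ne'
  have hd : ∀ y : ℝ, 1 ≤ y → HasDerivAt (fun y : ℝ => erf (a*y) / erf (c*y))
      ((2 / Real.sqrt Real.pi * Real.exp (-(a*y)^2) * a * erf (c*y) -
        erf (a*y) * (2 / Real.sqrt Real.pi * Real.exp (-(c*y)^2) * c)) / (erf (c*y))^2) y :=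
    fun y hy => (erf_comp_hasDerivAt a y).div (erf_comp_hasDerivAt c y) (hne y hy)
  apply strictMonoOn_of_deriv_pos (convex_Ici 1)
  · intro y hy
    exact ((hd y hy).differentiableAt.continuousAt).continuousWithinAt
  · intro y hy
    rw [interior_Ici] at hy
    have hy1 : 1 ≤ y := hy.le
    have hy0 : 0 < y := lt_trans one_pos hy
    rw [(hd y hy1).deriv]
    have hay : 0 < a * y := mul_pos ha hy0
    have hcy : 0 < c * y := mul_pos hc0 hy0
    have hg : gAux (c*y) < gAux (a*y) :=
      gAux_strictAnti (Set.mem_Ioi.mpr hay) (Set.mem_Ioi.mpr hcy) (by nlinarith)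
    have hEa := erf_pos hay
    have hEc := erf_pos hcy
    have hK : 0 < 2 / Real.sqrt Real.pi := div_pos two_pos (Real.sqrt_pos.mpr Real.pi_pos)
    unfold gAux at hg
    rw [div_lt_div_iff₀ hEc hEa] at hg
    apply div_pos _ (by positivity)
    have := Real.exp_pos (-(a*y)^2)
    have := Real.exp_pos (-(c*y)^2)
    nlinarith [mul_pos hK hy0]

lemma ratio_mono {a c : ℝ} (ha : 0 < a) (hac : a ≤ c) :
    MonotoneOn (fun y : ℝ => erf (a*y) / erf (c*y)) (Set.Ici 1) := by
  rcases eq_or_lt_of_le hac with rfl | h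
  · intro x hx y hy hxy
    have hx1 : (1:ℝ) ≤ x := hx
    have hy1 : (1:ℝ) ≤ y := hy
    simp only
    rw [div_self (erf_pos (show (0:ℝ) < a*x by nlinarith)).ne',
        div_self (erf_pos (show (0:ℝ) < a*y by nlinarith)).ne']
  · exact (ratio_strictMono ha h).monotoneOn

lemma ratio_pos {a c : ℝ} (ha : 0 < a) (hac : a ≤ c) {y : ℝ} (hy : 1 ≤ y) :
    0 < erf (a*y) / erf (c*y) := by
  have hc0 : 0 < c := lt_of_lt_of_le ha hac
  exact div_pos (erf_pos (by nlinarith)) (erf_pos (by nlinarith))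

theorem F_monotone (a b c d : ℝ) (ha : 0 < a) (hac : a ≤ c) (hb : 0 < b) (hbd : b ≤ d) :
    MonotoneOn (fun y : ℝ => (erf (a*y) * erf (b*y)) / (erf (c*y) * erf (d*y)))
      (Set.Ici (1:ℝ)) ∧
    ((a < c ∨ b < d) →
      StrictMonoOn (fun y : ℝ => (erf (a*y) * erf (b*y)) / (erf (c*y) * erf (d*y)))
        (Set.Ici (1:ℝ))) := by
  have hF : ∀ y : ℝ, (erf (a*y) * erf (b*y)) / (erf (c*y) * erf (d*y)) =
      (erf (a*y) / erf (c*y)) * (erf (b*y) / erf (d*y)) := by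
    intro y; rw [div_mul_div_comm]
  have h1m := ratio_mono ha hac
  have h2m := ratio_mono hb hbd
  constructor
  · intro x hx y hy hxy
    simp only [hF]
    exact mul_le_mul (h1m hx hy hxy) (h2m hx hy hxy)
      (ratio_pos hb hbd hx).le (ratio_pos ha hac hy).le
  · rintro (h | h) x hx y hy hxy
    · simp only [hF]
      calc erf (a*x) / erf (c*x) * (erf (b*x) / erf (d*x))
          ≤ erf (a*x) / erf (c*x) * (erf (b*y) / erf (d*y)) :=
            mul_le_mul_of_nonneg_left (h2m hx hy hxy.le) (ratio_pos ha hac hx).le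
        _ < erf (a*y) / erf (c*y) * (erf (b*y) / erf (d*y)) :=
            mul_lt_mul_of_pos_right (ratio_strictMono ha h hx hy hxy) (ratio_pos hb hbd hy)
    · simp only [hF]
      calc erf (a*x) / erf (c*x) * (erf (b*x) / erf (d*x))
          ≤ erf (a*y) / erf (c*y) * (erf (b*x) / erf (d*x)) :=
            mul_le_mul_of_nonneg_right (h1m hx hy hxy.le) (ratio_pos hb hbd hx).le
        _ < erf (a*y) / erf (c*y) * (erf (b*y) / erf (d*y)) :=
            mul_lt_mul_of_pos_left (ratio_strictMono hb h hx hy hxy) (ratio_pos ha hac hy)
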